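/- (Transfer lemma.) Let Σ̂ and Σ be d×d real symmetric positive semidefinite matrices, let η ∈ (0,1), and let m ∈ {2,…,d} be such that vᵀΣ̂v ≥ (1−η)·vᵀΣv for every v ∈ ℝ^d with at most m nonzero coordinates. Let D be a diagonal d×d matrix with nonnegative diagonal entries satisfying D_{jj} ≥ Σ̂_{jj} − (1−η)Σ_{jj} for every j. Then for every x ∈ ℝ^d, xᵀΣ̂x ≥ (1−η)·xᵀΣx − ‖D^{1/2}x‖₁²/(m−1), where D^{1/2} is the diagonal matrix with entries √(D_{jj}) and ‖·‖₁ is the ℓ₁ norm. -/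

import Mathlib

open Real

/-- Number of nonzero coordinates (ℓ₀ "norm"). -/
noncomputable def l0norm {d : ℕ} (v : Fin d → ℝ) : ℕ := {j | v j ≠ 0}.ncard

/-- Euclidean (ℓ₂) norm. -/
noncomputable def l2norm {d : ℕ} (v : Fin d → ℝ) : ℝ := Real.sqrt (∑ j, (v j) ^ 2)

/-- Quadratic form vᵀ A v. -/
noncomputable def quadForm {d : ℕ} (A : Matrix (Fin d) (Fin d) ℝ) (v : Fin d → ℝ) : ℝ :=
  dotProduct v (A.mulVec v)

/-- Minimum sparse eigenvalue φ_min(s; A). -/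
noncomputable def phiMin {d : ℕ} (s : ℕ) (A : Matrix (Fin d) (Fin d) ℝ) : ℝ :=
  sInf ((fun v => quadForm A v / (l2norm v) ^ 2) '' {v : Fin d → ℝ | v ≠ 0 ∧ l0norm v ≤ s})

/-- Maximum sparse eigenvalue φ_max(s; A). -/
noncomputable def phiMax {d : ℕ} (s : ℕ) (A : Matrix (Fin d) (Fin d) ℝ) : ℝ :=
  sSup ((fun v => quadForm A v / (l2norm v) ^ 2) '' {v : Fin d → ℝ | v ≠ 0 ∧ l0norm v ≤ s})

/-- The sparse unit sphere S₀^{d-1}(s). -/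
def sparseSphere (d s : ℕ) : Set (Fin d → ℝ) := {v | l2norm v = 1 ∧ l0norm v ≤ s}

section auxiliary

open Finset

private theorem bilin_aux {d m : ℕ} (A : Matrix (Fin d) (Fin d) ℝ) (u w : Fin m → Fin d → ℝ) :
    dotProduct (∑ i, u i) (A.mulVec (∑ i, w i))
      = ∑ i, ∑ i', dotProduct (u i) (A.mulVec (w i')) := by
  have h : A.mulVec (∑ i, w i) = ∑ i, A.mulVec (w i) := by
    simp [Matrix.mulVec_sum]
  rw [h]
  simp only [dotProduct, Finset.sum_apply, Finset.sum_mul, Finset.mul_sum]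
  rw [Finset.sum_comm]
  rw [Finset.sum_congr rfl fun (i' : Fin m) (_ : i' ∈ (univ : Finset (Fin m))) =>
    (Finset.sum_comm : (∑ x : Fin d, ∑ y : Fin m, u y x * A.mulVec (w i') x) = _)]
  rw [Finset.sum_comm]

private theorem marg_one {d m : ℕ} (p : Fin d → ℝ) (hp : ∑ j, p j = 1) (i₀ : Fin m)
    (G : Fin d → ℝ) :
    ∑ t : Fin m → Fin d, (∏ i, p (t i)) * G (t i₀) = ∑ a, p a * G a := by
  have h1 : ∀ t : Fin m → Fin d, (∏ i, p (t i)) * G (t i₀)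
      = ∑ a, (∏ i, p (t i) * (if i = i₀ then (if t i = a then 1 else 0) else 1)) * G a := by
    intro t
    have h2 : ∀ a : Fin d, (∏ i, p (t i) * (if i = i₀ then (if t i = a then 1 else 0) else 1))
        = (∏ i, p (t i)) * (if t i₀ = a then 1 else 0) := by
      intro a
      rw [Finset.prod_mul_distrib]
      congr 1
      simp [Finset.prod_ite_eq']
    simp only [h2]
    simp [mul_assoc, ite_mul, one_mul, zero_mul, Finset.mul_sum, Finset.sum_ite_eq]
  rw [Finset.sum_congr rfl fun t _ => h1 t, Finset.sum_comm]
  refine Finset.sum_congr rfl fun a _ => ?_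
  rw [← Finset.sum_mul]
  congr 1
  rw [← Fintype.piFinset_univ]
  rw [Finset.sum_prod_piFinset (univ : Finset (Fin d))
    (fun i j => p j * (if i = i₀ then (if j = a then 1 else 0) else 1))]
  have h3 : ∀ i : Fin m, (∑ j, p j * (if i = i₀ then (if j = a then 1 else 0) else 1))
      = (if i = i₀ then p a else 1) := by
    intro i
    by_cases hi : i = i₀ <;> simp [hi, mul_ite, Finset.sum_ite_eq', hp]
  rw [Finset.prod_congr rfl fun i _ => h3 i]
  simp [Finset.prod_ite_eq']

private theorem marg_two {d m : ℕ} (p : Fin d → ℝ) (hp : ∑ j, p j = 1) {i₀ i₁ : Fin m}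
    (hne : i₀ ≠ i₁) (F : Fin d → Fin d → ℝ) :
    ∑ t : Fin m → Fin d, (∏ i, p (t i)) * F (t i₀) (t i₁) = ∑ a, ∑ b, p a * p b * F a b := by
  have h1 : ∀ t : Fin m → Fin d, (∏ i, p (t i)) * F (t i₀) (t i₁)
      = ∑ a, ∑ b, (∏ i, p (t i) * ((if i = i₀ then (if t i = a then 1 else 0) else 1)
          * (if i = i₁ then (if t i = b then 1 else 0) else 1))) * F a b := by
    intro t
    have h2 : ∀ a b : Fin d, (∏ i, p (t i) * ((if i = i₀ then (if t i = a then 1 else 0) else 1)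
          * (if i = i₁ then (if t i = b then 1 else 0) else 1)))
        = (∏ i, p (t i)) * ((if t i₀ = a then 1 else 0) * (if t i₁ = b then 1 else 0)) := by
      intro a b
      rw [Finset.prod_mul_distrib, Finset.prod_mul_distrib]
      congr 2 <;> simp [Finset.prod_ite_eq']
    simp only [h2]
    simp [mul_assoc, ite_mul, one_mul, zero_mul, Finset.mul_sum, Finset.sum_ite_eq]
  rw [Finset.sum_congr rfl fun t _ => h1 t, Finset.sum_comm]
  refine Finset.sum_congr rfl fun a _ => ?_
  rw [Finset.sum_comm]
  refine Finset.sum_congr rfl fun b _ => ?_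
  rw [← Finset.sum_mul]
  congr 1
  rw [← Fintype.piFinset_univ]
  rw [Finset.sum_prod_piFinset (univ : Finset (Fin d))
    (fun i j => p j * ((if i = i₀ then (if j = a then 1 else 0) else 1)
      * (if i = i₁ then (if j = b then 1 else 0) else 1)))]
  have h3 : ∀ i : Fin m, (∑ j, p j * ((if i = i₀ then (if j = a then 1 else 0) else 1)
      * (if i = i₁ then (if j = b then 1 else 0) else 1)))
      = (if i = i₀ then p a else 1) * (if i = i₁ then p b else 1) := by
    intro i
    by_cases h0 : i = i₀
    · subst h0
      simp [hne, mul_ite, Finset.sum_ite_eq']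
    · by_cases h1 : i = i₁ <;> simp [h0, h1, hne, Ne.symm hne, mul_ite, Finset.sum_ite_eq', hp]
  rw [Finset.prod_congr rfl fun i _ => h3 i, Finset.prod_mul_distrib]
  simp [Finset.prod_ite_eq']

/-- The core probabilistic argument: if `A` is PSD on `m`-sparse vectors, `p` is a probability
vector and `p j * c j = x j`, then `quadForm A x ≥ -(∑ c a * x a * A a a)/(m-1)`. -/
private theorem core_transfer {d : ℕ} (A : Matrix (Fin d) (Fin d) ℝ) {m : ℕ} (hm : 2 ≤ m)
    (hA : ∀ v : Fin d → ℝ, l0norm v ≤ m → 0 ≤ quadForm A v)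
    (x c p : Fin d → ℝ) (hp0 : ∀ j, 0 ≤ p j) (hp1 : ∑ j, p j = 1)
    (hpc : ∀ j, p j * c j = x j) :
    -(∑ a, c a * x a * A a a) / ((m : ℝ) - 1) ≤ quadForm A x := by
  set F : Fin d → Fin d → ℝ := fun a b => c a * A a b * c b with hF
  set v : (Fin m → Fin d) → (Fin d → ℝ) :=
    fun t => ∑ i, c (t i) • (Pi.single (t i) (1:ℝ) : Fin d → ℝ) with hv
  have hsparse : ∀ t : Fin m → Fin d, l0norm (v t) ≤ m := by
    intro t
    have hsub : {j | v t j ≠ 0} ⊆ ↑(Finset.image t univ) := by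
      intro j hj
      by_contra hjm
      apply hj
      simp only [hv, Finset.sum_apply, Pi.smul_apply, Pi.single_apply, smul_eq_mul]
      refine Finset.sum_eq_zero fun i _ => ?_
      have : ¬ (j = t i) := fun h => hjm (by simp [h])
      simp [this]
    calc l0norm (v t) ≤ (↑(Finset.image t univ) : Set (Fin d)).ncard :=
          Set.ncard_le_ncard hsub (Set.toFinite _)
      _ = (Finset.image t univ).card := Set.ncard_coe_finset _
      _ ≤ (univ : Finset (Fin m)).card := Finset.card_image_le
      _ = m := by simp
  have hqv : ∀ t : Fin m → Fin d, quadForm A (v t) = ∑ i, ∑ i', F (t i) (t i') := by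
    intro t
    rw [quadForm, hv, bilin_aux]
    refine Finset.sum_congr rfl fun i _ => Finset.sum_congr rfl fun i' _ => ?_
    have h1 : A.mulVec (c (t i') • (Pi.single (t i') (1:ℝ) : Fin d → ℝ))
        = c (t i') • A.mulVec (Pi.single (t i') (1:ℝ)) := by
      rw [← Matrix.mulVecLin_apply, map_smul, Matrix.mulVecLin_apply]
    rw [h1, smul_dotProduct, dotProduct_smul]
    simp [hF, Matrix.mulVec_single, single_dotProduct, smul_eq_mul]
    ring
  have hnn : 0 ≤ ∑ t : Fin m → Fin d, (∏ i, p (t i)) * quadForm A (v t) :=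
    Finset.sum_nonneg fun t _ =>
      mul_nonneg (Finset.prod_nonneg fun i _ => hp0 _) (hA _ (hsparse t))
  have hQ : ∑ a, ∑ b, p a * p b * F a b = quadForm A x := by
    rw [quadForm]
    simp only [dotProduct, Matrix.mulVec, Finset.mul_sum]
    refine Finset.sum_congr rfl fun a _ => Finset.sum_congr rfl fun b _ => ?_
    rw [hF, ← hpc a, ← hpc b]
    ring
  have hEq : ∑ t : Fin m → Fin d, (∏ i, p (t i)) * quadForm A (v t)
      = (m : ℝ) * ((∑ a, p a * F a a) + ((m : ℝ) - 1) * quadForm A x) := by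
    have e1 : ∀ t : Fin m → Fin d, (∏ i, p (t i)) * quadForm A (v t)
        = ∑ i, ∑ i', (∏ i'', p (t i'')) * F (t i) (t i') := by
      intro t; rw [hqv, Finset.mul_sum]
      exact Finset.sum_congr rfl fun i _ => Finset.mul_sum _ _ _
    rw [Finset.sum_congr rfl fun t _ => e1 t, Finset.sum_comm]
    have e2 : ∀ i : Fin m, ∑ t : Fin m → Fin d, ∑ i', (∏ i'', p (t i'')) * F (t i) (t i')
        = ∑ i', ∑ t : Fin m → Fin d, (∏ i'', p (t i'')) * F (t i) (t i') :=
      fun i => Finset.sum_comm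
    rw [Finset.sum_congr rfl fun i _ => e2 i]
    have e3 : ∀ i i' : Fin m, ∑ t : Fin m → Fin d, (∏ i'', p (t i'')) * F (t i) (t i')
        = if i = i' then ∑ a, p a * F a a else quadForm A x := by
      intro i i'
      by_cases h : i = i'
      · subst h
        rw [if_pos rfl]
        exact marg_one p hp1 i (fun a => F a a)
      · rw [if_neg h, ← hQ]
        exact marg_two p hp1 h F
    rw [Finset.sum_congr rfl fun i _ => Finset.sum_congr rfl fun i' _ => e3 i i']
    have e4 : ∀ i : Fin m, (∑ i' : Fin m, if i = i' then (∑ a, p a * F a a) else quadForm A x)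
        = (∑ a, p a * F a a) + ((m : ℝ) - 1) * quadForm A x := by
      intro i
      have h5 : ∀ i' : Fin m, (if i = i' then (∑ a, p a * F a a) else quadForm A x)
          = quadForm A x + (if i = i' then (∑ a, p a * F a a) - quadForm A x else 0) := by
        intro i'; split <;> ring
      rw [Finset.sum_congr rfl fun i' _ => h5 i', Finset.sum_add_distrib, Finset.sum_const,
        Finset.sum_ite_eq univ i, Finset.card_univ]
      simp [nsmul_eq_mul]
      ring
    rw [Finset.sum_congr rfl fun i _ => e4 i, Finset.sum_const, Finset.card_univ]
    simp [nsmul_eq_mul]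
    ring
  have hDelta : ∑ a, p a * F a a = ∑ a, c a * x a * A a a := by
    refine Finset.sum_congr rfl fun a _ => ?_
    rw [hF, ← hpc a]; ring
  have hm' : (2:ℝ) ≤ (m:ℝ) := by exact_mod_cast hm
  have h1 : (0:ℝ) < (m:ℝ) - 1 := by linarith
  have hmpos : (0:ℝ) < (m:ℝ) := by linarith
  rw [hEq, hDelta] at hnn
  have h0 : 0 ≤ (∑ a, c a * x a * A a a) + ((m:ℝ) - 1) * quadForm A x := by
    nlinarith [hnn]
  rw [div_le_iff₀ h1]
  linarith

end auxiliary

/-- Transfer lemma: a sparse Riesz lower bound transfers to all vectors up to an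
ℓ₁ correction term. Here `D` records the diagonal entries of the diagonal matrix,
and `‖D^{1/2}x‖₁ = ∑ j, √(D j) * |x j|`. -/
theorem transfer_lemma {d : ℕ} (Sighat Sig : Matrix (Fin d) (Fin d) ℝ)
    (hSighat : Sighat.PosSemidef) (hSig : Sig.PosSemidef)
    (η : ℝ) (hη0 : 0 < η) (hη1 : η < 1)
    (m : ℕ) (hm2 : 2 ≤ m) (hmd : m ≤ d)
    (hSRC : ∀ v : Fin d → ℝ, l0norm v ≤ m → (1 - η) * quadForm Sig v ≤ quadForm Sighat v)
    (D : Fin d → ℝ) (hD0 : ∀ j, 0 ≤ D j)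
    (hDlb : ∀ j, Sighat j j - (1 - η) * Sig j j ≤ D j) :
    ∀ x : Fin d → ℝ,
      (1 - η) * quadForm Sig x - (∑ j, Real.sqrt (D j) * |x j|) ^ 2 / ((m : ℝ) - 1)
        ≤ quadForm Sighat x := by
  intro x
  have hm' : (2:ℝ) ≤ (m:ℝ) := by exact_mod_cast hm2
  have hm1 : (0:ℝ) < (m:ℝ) - 1 := by linarith
  set A : Matrix (Fin d) (Fin d) ℝ := Sighat - (1 - η) • Sig with hAdef
  have hquad : ∀ v : Fin d → ℝ,
      quadForm A v = quadForm Sighat v - (1 - η) * quadForm Sig v := by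
    intro v
    simp [hAdef, quadForm, Matrix.sub_mulVec, Matrix.smul_mulVec,
      dotProduct_sub, dotProduct_smul, smul_eq_mul]
  have hA : ∀ v : Fin d → ℝ, l0norm v ≤ m → 0 ≤ quadForm A v := fun v hv => by
    rw [hquad]; linarith [hSRC v hv]
  have hAdiag : ∀ j, A j j ≤ D j := fun j => by
    simpa [hAdef, Matrix.sub_apply, Matrix.smul_apply, smul_eq_mul] using hDlb j
  -- Step 1: the bound with `D + ε` for every `ε > 0`.
  have key : ∀ ε : ℝ, 0 < ε →
      -((∑ j, Real.sqrt (D j + ε) * |x j|) ^ 2) / ((m:ℝ) - 1) ≤ quadForm A x := by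
    intro ε hε
    by_cases hx : x = 0
    · subst hx
      have hz : quadForm A (0 : Fin d → ℝ) = 0 := by simp [quadForm]
      rw [hz]
      exact div_nonpos_of_nonpos_of_nonneg (neg_nonpos.mpr (sq_nonneg _)) hm1.le
    · set L := ∑ j, Real.sqrt (D j + ε) * |x j| with hL
      have hterm : ∀ j, 0 ≤ Real.sqrt (D j + ε) * |x j| :=
        fun j => mul_nonneg (Real.sqrt_nonneg _) (abs_nonneg _)
      obtain ⟨j₀, hj₀⟩ : ∃ j, x j ≠ 0 := by
        by_contra h; push_neg at h; exact hx (funext h)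
      have hsqrtpos : ∀ j, 0 < Real.sqrt (D j + ε) :=
        fun j => Real.sqrt_pos.mpr (by linarith [hD0 j])
      have hLpos : 0 < L := by
        refine Finset.sum_pos' (fun j _ => hterm j) ⟨j₀, Finset.mem_univ _, ?_⟩
        exact mul_pos (hsqrtpos j₀) (abs_pos.mpr hj₀)
      set p : Fin d → ℝ := fun j => Real.sqrt (D j + ε) * |x j| / L with hp
      set c : Fin d → ℝ := fun j => if p j = 0 then 0 else x j / p j with hc
      have hp0 : ∀ j, 0 ≤ p j := fun j => div_nonneg (hterm j) hLpos.le
      have hpx : ∀ j, p j = 0 → x j = 0 := by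
        intro j h
        have h2 : Real.sqrt (D j + ε) * |x j| = 0 := by
          have := h
          rw [hp] at this
          field_simp at this
          rw [mul_zero] at this
          exact this
        rcases mul_eq_zero.mp h2 with h3 | h3
        · exact absurd h3 (hsqrtpos j).ne'
        · exact abs_eq_zero.mp h3
      have hp1 : ∑ j, p j = 1 := by
        rw [hp, ← Finset.sum_div, ← hL, div_self hLpos.ne']
      have hpc : ∀ j, p j * c j = x j := by
        intro j
        by_cases h : p j = 0
        · simp [hc, h, hpx j h]
        · rw [hc]; simp only [h, if_false]
          field_simp
      have hcore := core_transfer A hm2 hA x c p hp0 hp1 hpc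
      refine le_trans ?_ hcore
      have hstep : ∀ a, c a * x a * A a a ≤ Real.sqrt (D a + ε) * |x a| * L := by
        intro a
        by_cases h : p a = 0
        · simp [hc, h, hpx a h]
        · have hxa : x a ≠ 0 := fun h2 => h (by simp [hp, h2])
          have hpa : 0 < p a := lt_of_le_of_ne (hp0 a) (Ne.symm h)
          have hcx : 0 ≤ c a * x a := by
            rw [hc]; simp only [h, if_false]
            rw [div_mul_eq_mul_div]
            exact div_nonneg (mul_self_nonneg _) hpa.le
          have hAD : A a a ≤ D a + ε := by linarith [hAdiag a, hε]
          calc c a * x a * A a a ≤ c a * x a * (D a + ε) :=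
                mul_le_mul_of_nonneg_left hAD hcx
            _ = Real.sqrt (D a + ε) * |x a| * L := by
                rw [hc]; simp only [h, if_false]
                rw [hp]
                have hsq : Real.sqrt (D a + ε) * Real.sqrt (D a + ε) = D a + ε :=
                  Real.mul_self_sqrt (by linarith [hD0 a])
                have habs : |x a| * |x a| = x a * x a := abs_mul_abs_self _
                have hne : Real.sqrt (D a + ε) * |x a| ≠ 0 :=
                  (mul_pos (hsqrtpos a) (abs_pos.mpr hxa)).ne'
                beta_reduce
                have e : x a / (Real.sqrt (D a + ε) * |x a| / L) * x a * (D a + ε)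
                    = x a * x a * (D a + ε) * L / (Real.sqrt (D a + ε) * |x a|) := by
                  rw [div_div_eq_mul_div]; ring
                rw [e, div_eq_iff hne]
                linear_combination (-(|x a| * |x a| * L)) * hsq + (-((D a + ε) * L)) * habs
      have hsum : (∑ a, c a * x a * A a a) ≤ L ^ 2 := by
        calc (∑ a, c a * x a * A a a) ≤ ∑ a, Real.sqrt (D a + ε) * |x a| * L :=
              Finset.sum_le_sum fun a _ => hstep a
          _ = L * L := by rw [← Finset.sum_mul, ← hL]
          _ = L ^ 2 := (sq L).symm
      exact (div_le_div_iff_of_pos_right hm1).mpr (neg_le_neg hsum)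
  -- Step 2: let ε → 0⁺.
  have hlim : -((∑ j, Real.sqrt (D j) * |x j|) ^ 2) / ((m:ℝ) - 1) ≤ quadForm A x := by
    have hco : Continuous fun ε : ℝ =>
        -((∑ j, Real.sqrt (D j + ε) * |x j|) ^ 2) / ((m:ℝ) - 1) := by
      apply Continuous.div_const
      apply Continuous.neg
      apply Continuous.pow
      apply continuous_finset_sum
      intro j _
      exact (Real.continuous_sqrt.comp (continuous_const.add continuous_id)).mul continuous_const
    have htend := (hco.tendsto 0).mono_left (nhdsWithin_le_nhds (s := Set.Ioi (0:ℝ)))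
    have h0 : -((∑ j, Real.sqrt (D j + 0) * |x j|) ^ 2) / ((m:ℝ) - 1)
        = -((∑ j, Real.sqrt (D j) * |x j|) ^ 2) / ((m:ℝ) - 1) := by norm_num
    rw [h0] at htend
    exact le_of_tendsto htend (Filter.eventually_of_mem self_mem_nhdsWithin fun ε hε => key ε hε)
  rw [hquad] at hlim
  rw [neg_div] at hlim
  linarith
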